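/- For every Borel probability measure μ on X that is invariant under the left shift T, every k ∈ ℕ, and every 0 ≤ i < 2^k, one has μ(u_k(i)) = μ(ū_k(i)) = 2^{−(k+1)}; i.e., all 2^{k+1} k-canonical cylinders have equal measure 2^{−(k+1)}. -/

import Mathlib

/-- The substitution σ on symbols: σ(0) = 01, σ(1) = 10 (with 0 ↔ `false`, 1 ↔ `true`). -/
def sigmaSub (b : Bool) : List Bool := [b, !b]

/-- The substitution σ extended to words by concatenation. -/
def subst (w : List Bool) : List Bool := w.flatMap sigmaSub

/-- The flip of a binary word: exchange 0 and 1 in every position. -/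
def flipWord (w : List Bool) : List Bool := w.map (fun b => !b)

/-- u_k = σ^k(0). -/
def uWord : ℕ → List Bool
  | 0 => [false]
  | k + 1 => subst (uWord k)

/-- The Morse sequence: its first 2^k symbols form the word u_k for every k. -/
def morse (n : ℕ) : Bool := (uWord (n + 1)).getD n false

lemma subst_cons (b : Bool) (w : List Bool) : subst (b :: w) = [b, !b] ++ subst w := rfl

lemma subst_length (w : List Bool) : (subst w).length = 2 * w.length := by
  induction w with
  | nil => rfl
  | cons b w ih => simp [subst_cons, ih]; ring

lemma subst_getD_even (w : List Bool) (j : ℕ) (hj : j < w.length) :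
    (subst w).getD (2 * j) false = w.getD j false := by
  induction w generalizing j with
  | nil => simp at hj
  | cons b w ih =>
    cases j with
    | zero => rfl
    | succ j =>
      have : 2 * (j + 1) = (2 * j) + 2 := by ring
      rw [this, subst_cons]
      simpa using ih j (by simpa using hj)

lemma subst_getD_odd (w : List Bool) (j : ℕ) (hj : j < w.length) :
    (subst w).getD (2 * j + 1) false = !(w.getD j false) := by
  induction w generalizing j with
  | nil => simp at hj
  | cons b w ih =>
    cases j with
    | zero => rfl
    | succ j =>
      have : 2 * (j + 1) + 1 = (2 * j + 1) + 2 := by ring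
      rw [this, subst_cons]
      simpa using ih j (by simpa using hj)

lemma uWord_length (k : ℕ) : (uWord k).length = 2 ^ k := by
  induction k with
  | zero => rfl
  | succ k ih => rw [uWord, subst_length, ih, pow_succ]; ring

lemma subst_flip (w : List Bool) : subst (flipWord w) = flipWord (subst w) := by
  induction w with
  | nil => rfl
  | cons b w ih => simp [flipWord, subst_cons] at *; exact ih

lemma subst_append (v w : List Bool) : subst (v ++ w) = subst v ++ subst w := by
  simp [subst]

lemma uWord_succ (k : ℕ) : uWord (k + 1) = uWord k ++ flipWord (uWord k) := by
  induction k with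
  | zero => rfl
  | succ k ih =>
    show subst (uWord (k+1)) = uWord (k+1) ++ flipWord (uWord (k+1))
    rw [ih, subst_append, subst_flip, ← ih]
    rfl

lemma uWord_prefix (k : ℕ) : uWord k <+: uWord (k + 1) := by
  rw [uWord_succ]; exact List.prefix_append _ _

lemma uWord_prefix' {k k' : ℕ} (h : k ≤ k') : uWord k <+: uWord k' := by
  induction k' with
  | zero => simpa [Nat.le_zero.mp h]
  | succ k' ih =>
    rcases Nat.lt_or_ge k (k' + 1) with h' | h'
    · exact (ih (Nat.lt_succ_iff.mp h')).trans (uWord_prefix k')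
    · have : k = k' + 1 := le_antisymm h h'
      simp [this]

lemma getD_of_prefix {w w' : List Bool} (h : w <+: w') {j : ℕ} (hj : j < w.length) :
    w'.getD j false = w.getD j false := by
  obtain ⟨t, rfl⟩ := h
  rw [List.getD_eq_getElem?_getD, List.getD_eq_getElem?_getD,
    List.getElem?_append_left hj]

lemma morse_eq_getD {k n : ℕ} (h : n < 2 ^ k) : morse n = (uWord k).getD n false := by
  have hn : n < 2 ^ (n + 1) :=
    lt_of_lt_of_le (Nat.lt_two_pow_self (n := n)) (Nat.pow_le_pow_right (by norm_num) (Nat.le_succ n))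
  rcases le_or_gt k (n + 1) with hk | hk
  · exact getD_of_prefix (uWord_prefix' hk) (by rw [uWord_length]; exact h)
  · exact (getD_of_prefix (uWord_prefix' hk.le) (by rw [uWord_length]; exact hn)).symm

lemma morse_two_mul (n : ℕ) : morse (2 * n) = morse n := by
  have hn : n < 2 ^ (n + 1) :=
    lt_of_lt_of_le (Nat.lt_two_pow_self (n := n)) (Nat.pow_le_pow_right (by norm_num) (Nat.le_succ n))
  have h1 : 2 * n < 2 ^ (n + 2) := by
    calc 2 * n < 2 * 2 ^ (n+1) := by omega
    _ = 2 ^ (n+2) := by ring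
  rw [morse_eq_getD h1]
  show (subst (uWord (n+1))).getD (2*n) false = morse n
  rw [subst_getD_even _ _ (by rw [uWord_length]; exact hn)]
  rfl

lemma morse_two_mul_add_one (n : ℕ) : morse (2 * n + 1) = !(morse n) := by
  have hn : n < 2 ^ (n + 1) :=
    lt_of_lt_of_le (Nat.lt_two_pow_self (n := n)) (Nat.pow_le_pow_right (by norm_num) (Nat.le_succ n))
  have h1 : 2 * n + 1 < 2 ^ (n + 2) := by
    calc 2 * n + 1 < 2 * 2 ^ (n+1) := by omega
    _ = 2 ^ (n+2) := by ring
  rw [morse_eq_getD h1]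
  show (subst (uWord (n+1))).getD (2*n+1) false = !(morse n)
  rw [subst_getD_odd _ _ (by rw [uWord_length]; exact hn)]
  rfl

lemma morse_zero : morse 0 = false := rfl
lemma morse_one : morse 1 = true := rfl

lemma morse_block (k : ℕ) : ∀ n j : ℕ, j < 2 ^ k →
    morse (n * 2 ^ k + j) = xor (morse n) (morse j) := by
  induction k with
  | zero =>
    intro n j hj
    interval_cases j
    simp [morse_zero]
  | succ k ih =>
    intro n j hj
    rcases Nat.even_or_odd j with ⟨q, rfl⟩ | ⟨q, rfl⟩
    · have hq : q < 2 ^ k := by rw [pow_succ] at hj; omega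
      have e1 : n * 2 ^ (k+1) + (q + q) = 2 * (n * 2 ^ k + q) := by rw [pow_succ]; ring
      have e2 : q + q = 2 * q := by ring
      rw [e1, morse_two_mul, ih n q hq, e2, morse_two_mul]
    · have hq : q < 2 ^ k := by rw [pow_succ] at hj; omega
      have e1 : n * 2 ^ (k+1) + (2 * q + 1) = 2 * (n * 2 ^ k + q) + 1 := by
        rw [pow_succ]; ring
      rw [e1, morse_two_mul_add_one, ih n q hq, morse_two_mul_add_one]
      cases morse n <;> cases morse q <;> rfl

lemma morse_pair (m : ℕ) : morse (2 * m + 1) = !(morse (2 * m)) := by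
  rw [morse_two_mul, morse_two_mul_add_one]

lemma no_bbb (n : ℕ) : ¬(morse n = morse (n + 1) ∧ morse (n + 1) = morse (n + 2)) := by
  rintro ⟨h1, h2⟩
  rcases Nat.even_or_odd n with ⟨m, rfl⟩ | ⟨m, rfl⟩
  · have hp := morse_pair m
    rw [show 2 * m = m + m from by ring] at hp
    rw [← h1] at hp
    simp at hp
  · have hp := morse_pair (m + 1)
    rw [show 2 * (m+1) + 1 = 2*m+1+2 from by ring, show 2 * (m+1) = 2*m+1+1 from by ring] at hp
    rw [← h2] at hp
    simp at hp

lemma morse_not_periodic (k : ℕ) : ∀ s : ℕ, ∃ t < 6 * 2 ^ k, morse (s + t) ≠ morse (s + t + 2 ^ k) := by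
  induction k with
  | zero =>
    intro s
    by_contra h
    push_neg at h
    have h0 := h 0 (by norm_num)
    have h1 := h 1 (by norm_num)
    simp at h0 h1
    exact no_bbb s ⟨h0, by simpa [Nat.add_assoc] using h1⟩
  | succ k ih =>
    intro s
    by_contra h
    push_neg at h
    obtain ⟨t, ht, hne⟩ := ih ((s + 1) / 2)
    set s' := (s + 1) / 2 with hs'
    have h2s : 2 * s' = s ∨ 2 * s' = s + 1 := by omega
    have ht' : 2 * s' + 2 * t - s < 6 * 2 ^ (k + 1) := by
      rw [pow_succ]; omega
    have := h (2 * s' + 2 * t - s) ht'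
    have e1 : s + (2 * s' + 2 * t - s) = 2 * (s' + t) := by omega
    rw [e1] at this
    have e2' : 2 * (s' + t) + 2 ^ (k+1) = 2 * (s' + t + 2 ^ k) := by rw [pow_succ]; ring
    rw [e2', morse_two_mul, morse_two_mul] at this
    exact hne this


/-- The subword of `x` on the interval `[p, p + w.length)` is the word `w`. -/
def readsWord (x : ℤ → Bool) (p : ℤ) (w : List Bool) : Prop :=
  ∀ j : ℕ, j < w.length → x (p + j) = w.getD j false

/-- The Morse minimal set X: bi-infinite sequences all of whose finite subwords
occur in the Morse sequence. -/
def morseShiftX : Set (ℤ → Bool) :=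
  {x | ∀ (a : ℤ) (l : ℕ), ∃ s : ℕ, ∀ j : ℕ, j < l → x (a + j) = morse (s + j)}

/-- The left shift T. -/
def shiftT (x : ℤ → Bool) : ℤ → Bool := fun i => x (i + 1)

/-- `hasOffset k x i`: coordinate 0 occupies position `i` in its interval, i.e. on every
interval `[-i + m·2^k, -i + (m+1)·2^k)` the sequence `x` reads u_k or its flip. -/
def hasOffset (k : ℕ) (x : ℤ → Bool) (i : ℕ) : Prop :=
  ∀ m : ℤ, readsWord x (-(i : ℤ) + m * 2 ^ k) (uWord k) ∨
    readsWord x (-(i : ℤ) + m * 2 ^ k) (flipWord (uWord k))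

/-- The k-canonical cylinders: `cyl k false i` is u_k(i), `cyl k true i` is ū_k(i). -/
def cyl (k : ℕ) (b : Bool) (i : ℕ) : Set {x : ℤ → Bool // x ∈ morseShiftX} :=
  {x | hasOffset k x.val i ∧
    x.val 0 = (if b then flipWord (uWord k) else uWord k).getD i false}

/-- block structure predicate in a convenient normal form -/
def blockAt (x : ℤ → Bool) (p : ℤ) (b : Bool) (k : ℕ) : Prop :=
  ∀ j : ℕ, j < 2 ^ k → x (p + j) = xor b (morse j)

lemma uWord_getD {k j : ℕ} (hj : j < 2 ^ k) : (uWord k).getD j false = morse j :=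
  (morse_eq_getD hj).symm

lemma flipWord_length (w : List Bool) : (flipWord w).length = w.length := by
  simp [flipWord]

lemma flip_getD (w : List Bool) {j : ℕ} (hj : j < w.length) :
    (flipWord w).getD j false = !(w.getD j false) := by
  rw [List.getD_eq_getElem _ _ (by rwa [flipWord_length]),
    List.getD_eq_getElem _ _ hj]
  simp [flipWord]

lemma readsWord_uWord_iff {x : ℤ → Bool} {p : ℤ} {k : ℕ} :
    readsWord x p (uWord k) ↔ blockAt x p false k := by
  constructor <;> intro h j hj
  · rw [h j (by rwa [uWord_length]), uWord_getD hj]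
    simp
  · rw [uWord_length] at hj
    rw [h j hj, uWord_getD hj]
    simp

lemma readsWord_flip_iff {x : ℤ → Bool} {p : ℤ} {k : ℕ} :
    readsWord x p (flipWord (uWord k)) ↔ blockAt x p true k := by
  constructor <;> intro h j hj
  · rw [h j (by rwa [flipWord_length, uWord_length]),
      flip_getD _ (by rwa [uWord_length]), uWord_getD hj]
    simp
  · rw [flipWord_length, uWord_length] at hj
    rw [h j hj, flip_getD _ (by rwa [uWord_length]), uWord_getD hj]
    simp

lemma hasOffset_iff {k : ℕ} {x : ℤ → Bool} {i : ℕ} :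
    hasOffset k x i ↔ ∀ m : ℤ, ∃ b, blockAt x (-(i : ℤ) + m * 2 ^ k) b k := by
  constructor <;> intro h m
  · rcases h m with h' | h'
    · exact ⟨false, readsWord_uWord_iff.mp h'⟩
    · exact ⟨true, readsWord_flip_iff.mp h'⟩
  · rcases h m with ⟨b, hb⟩
    cases b
    · exact Or.inl (readsWord_uWord_iff.mpr hb)
    · exact Or.inr (readsWord_flip_iff.mpr hb)

lemma morse_pow (k : ℕ) : morse (2 ^ k) = true := by
  have h := morse_block k 1 0 (pow_pos (by norm_num) k)
  rw [one_mul, Nat.add_zero] at h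
  rw [h, morse_one, morse_zero]
  rfl

lemma blockAt_zero {x : ℤ → Bool} {p : ℤ} {b : Bool} {k : ℕ} (h : blockAt x p b k) :
    x p = b := by
  have h0 := h 0 (pow_pos (by norm_num) k)
  rw [morse_zero, Nat.cast_zero, add_zero, Bool.xor_false] at h0
  exact h0

/-- D3: descending one level -/
lemma hasOffset_down {k : ℕ} {x : ℤ → Bool} {i : ℕ} (h : hasOffset (k + 1) x i) :
    hasOffset k x (i % 2 ^ k) := by
  rw [hasOffset_iff] at h ⊢
  intro m'
  set r : ℕ := i % 2 ^ k with hr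
  set d : ℕ := i / 2 ^ k with hd
  have hN : r + 2 ^ k * d = i := Nat.mod_add_div i (2 ^ k)
  have hI : (i : ℤ) = (r : ℤ) + (d : ℤ) * 2 ^ k := by
    have hc := congrArg (Nat.cast : ℕ → ℤ) hN
    push_cast at hc
    linear_combination (-1 : ℤ) * hc
  set M : ℤ := m' + d with hM
  have hdm : 2 * (M / 2) + M % 2 = M := Int.mul_ediv_add_emod M 2
  obtain ⟨b, hb⟩ := h (M / 2)
  rcases Int.emod_two_eq_zero_or_one M with he | he
  · refine ⟨b, fun j hj => ?_⟩
    have hpos : -(r : ℤ) + m' * 2 ^ k = -(i : ℤ) + (M / 2) * 2 ^ (k + 1) := by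
      rw [hI, pow_succ]
      have : 2 * (M / 2) = m' + d := by omega
      linear_combination (-(2 ^ k : ℤ)) * this
    rw [hpos]
    exact hb j (lt_of_lt_of_le hj (by rw [pow_succ]; omega))
  · refine ⟨!b, fun j hj => ?_⟩
    have hpos : -(r : ℤ) + m' * 2 ^ k + j
        = -(i : ℤ) + (M / 2) * 2 ^ (k + 1) + ((2 ^ k + j : ℕ) : ℤ) := by
      rw [hI, pow_succ]
      push_cast
      have : 2 * (M / 2) + 1 = m' + d := by omega
      linear_combination (-(2 ^ k : ℤ)) * this
    have hj' : 2 ^ k + j < 2 ^ (k + 1) := by rw [pow_succ]; omega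
    have := hb (2 ^ k + j) hj'
    rw [← hpos] at this
    rw [this]
    have hmj : morse (2 ^ k + j) = !(morse j) := by
      have := morse_block k 1 j hj
      simpa [morse_one, one_mul] using this
    rw [hmj]
    cases b <;> cases morse j <;> rfl

/-- D2: existence of an offset for points of X -/
lemma exists_offset {x : ℤ → Bool} (hx : x ∈ morseShiftX) (k : ℕ) :
    ∃ i < 2 ^ k, hasOffset k x i := by
  classical
  have hpow : 0 < 2 ^ k := pow_pos (by norm_num) k
  have hxw : ∀ N : ℕ, ∃ s : ℕ, ∀ j : ℕ, j < 2 * (N + 1) * 2 ^ k →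
      x ((-(((N + 1) * 2 ^ k : ℕ) : ℤ)) + j) = morse (s + j) := fun N => hx _ _
  choose s hs using hxw
  obtain ⟨i, hi⟩ := Finite.exists_infinite_fiber
    (fun N => (⟨s N % 2 ^ k, Nat.mod_lt _ hpow⟩ : Fin (2 ^ k)))
  refine ⟨i.val, i.isLt, ?_⟩
  rw [hasOffset_iff]
  intro m
  have hi' : Set.Infinite _ := Set.infinite_coe_iff.mp hi
  obtain ⟨N, hN, hNm⟩ := hi'.exists_gt m.natAbs
  have hiv : s N % 2 ^ k = i.val := by
    have := hN
    simp only [Set.mem_preimage, Set.mem_singleton_iff] at this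
    exact congrArg Fin.val this
  set iv := i.val with hivdef
  obtain ⟨c, hc⟩ : ∃ c, iv + c = 2 ^ k := ⟨2 ^ k - iv, by omega⟩
  set q := s N / 2 ^ k with hq
  have hs0 : iv + 2 ^ k * q = s N := by rw [← hiv, hq]; exact Nat.mod_add_div _ _
  have hmN : 0 ≤ m + N := by omega
  set mm' := (m + N).toNat with hmm'def
  have hmm' : (mm' : ℤ) = m + N := Int.toNat_of_nonneg hmN
  have hmm'lt : mm' < 2 * N := by omega
  -- we prove blockAt with colour morse (q + mm' + 1)
  refine ⟨morse (q + mm' + 1), fun j hj => ?_⟩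
  set jj := mm' * 2 ^ k + c + j with hjj
  have hjjlt : jj < 2 * (N + 1) * 2 ^ k := by
    have h1 : jj < mm' * 2 ^ k + 2 * 2 ^ k := by
      have : c + j < 2 * 2 ^ k := by omega
      calc jj = mm' * 2 ^ k + (c + j) := by rw [hjj]; ring
        _ < mm' * 2 ^ k + 2 * 2 ^ k := Nat.add_lt_add_left this _
    have h2 : mm' * 2 ^ k + 2 * 2 ^ k = (mm' + 2) * 2 ^ k := by ring
    have h3 : (mm' + 2) * 2 ^ k ≤ 2 * (N + 1) * 2 ^ k :=
      Nat.mul_le_mul_right _ (by omega)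
    omega
  have hval := hs N jj hjjlt
  have hcast : (-(((N + 1) * 2 ^ k : ℕ) : ℤ)) + (jj : ℤ) = -(iv : ℤ) + m * 2 ^ k + (j : ℤ) := by
    have hcc : (iv : ℤ) + (c : ℤ) = 2 ^ k := by exact_mod_cast hc
    rw [hjj]
    push_cast
    linear_combination (2 ^ k : ℤ) * hmm' + hcc
  have hsum : s N + jj = (q + mm' + 1) * 2 ^ k + j := by
    rw [hjj, ← hs0, ← hc]
    ring
  rw [hcast] at hval
  rw [hval, hsum, morse_block k _ j hj]

/-- The half-shifted double block structure is impossible for points of X. -/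
lemma half_shift_absurd {x : ℤ → Bool} (hx : x ∈ morseShiftX) (k r : ℕ)
    (h1 : hasOffset (k + 1) x r) (h2 : hasOffset (k + 1) x (r + 2 ^ k)) : False := by
  rw [hasOffset_iff] at h1 h2
  set L : ℤ := 2 ^ (k + 1) with hL
  have hB : ∀ m : ℤ, blockAt x (-(r : ℤ) + m * L) (x (-(r : ℤ) + m * L)) (k + 1) := by
    intro m
    obtain ⟨b, hb⟩ := h1 m
    rwa [blockAt_zero hb]
  have hC : ∀ m : ℤ, blockAt x (-(r : ℤ) - 2 ^ k + m * L) (x (-(r : ℤ) - 2 ^ k + m * L)) (k + 1) := by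
    intro m
    obtain ⟨b, hb⟩ := h2 m
    have hpos : -((r + 2 ^ k : ℕ) : ℤ) + m * 2 ^ (k + 1) = -(r : ℤ) - 2 ^ k + m * L := by
      push_cast [hL]
      ring
    rw [hpos] at hb
    rwa [blockAt_zero hb]
  have hk2 : 2 ^ k < 2 ^ (k + 1) := by
    have := pow_pos (show 0 < 2 from by norm_num) k
    rw [pow_succ]; omega
  have hstep : ∀ m : ℤ, x (-(r : ℤ) + (m + 1) * L) = x (-(r : ℤ) + m * L) := by
    intro m
    -- C (m+1) = !(B m)
    have e1 : -(r : ℤ) + m * L + ((2 ^ k : ℕ) : ℤ) = -(r : ℤ) - 2 ^ k + (m + 1) * L := by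
      push_cast [hL, pow_succ]
      ring
    have hx1 := hB m (2 ^ k) hk2
    rw [e1] at hx1
    rw [morse_pow, Bool.xor_true] at hx1
    have hxc := blockAt_zero (hC (m + 1))
    -- hx1 : x (posC (m+1)) = !(B m)
    -- B (m+1) = !(C (m+1))
    have e2 : -(r : ℤ) - 2 ^ k + (m + 1) * L + ((2 ^ k : ℕ) : ℤ) = -(r : ℤ) + (m + 1) * L := by
      push_cast
      ring
    have hx2 := hC (m + 1) (2 ^ k) hk2
    rw [e2, morse_pow, Bool.xor_true] at hx2
    rw [hx2, hx1]
    simp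
  have hconst : ∀ m : ℤ, x (-(r : ℤ) + m * L) = x (-(r : ℤ)) := by
    intro m
    induction m using Int.induction_on with
    | zero => rw [zero_mul, add_zero]
    | succ n ih => rw [hstep n, ih]
    | pred n ih =>
      have hs' := hstep (-(n : ℤ) - 1)
      rw [show (-(n : ℤ) - 1 + 1) = -(n : ℤ) from by ring] at hs'
      rw [← hs']
      exact ih
  have hper : ∀ p : ℤ, x (p + L) = x p := by
    intro p
    have hLpos : (0 : ℤ) < L := by rw [hL]; positivity
    set m := (p + r) / L with hm
    set qq := (p + r) % L with hqq
    have hq0 : 0 ≤ qq := Int.emod_nonneg _ (ne_of_gt hLpos)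
    have hqL : qq < L := Int.emod_lt_of_pos _ hLpos
    have hdm : L * m + qq = p + r := Int.mul_ediv_add_emod (p + r) L
    set qn := qq.toNat with hqn
    have hqnc : (qn : ℤ) = qq := Int.toNat_of_nonneg hq0
    have hqn2 : qn < 2 ^ (k + 1) := by
      have : (qn : ℤ) < 2 ^ (k + 1) := by rw [hqnc, ← hL]; exact hqL
      exact_mod_cast this
    have h1' := hB m qn hqn2
    have h2' := hB (m + 1) qn hqn2
    have ep : -(r : ℤ) + m * L + (qn : ℤ) = p := by
      rw [hqnc]
      linear_combination hdm
    have ep2 : -(r : ℤ) + (m + 1) * L + (qn : ℤ) = p + L := by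
      rw [hqnc]
      linear_combination hdm
    rw [ep] at h1'
    rw [ep2] at h2'
    rw [h1', h2', hconst m, hconst (m + 1)]
  obtain ⟨s, hs⟩ := hx 0 (7 * 2 ^ (k + 1))
  obtain ⟨t, ht, hne⟩ := morse_not_periodic (k + 1) s
  apply hne
  have e1 := hs t (by omega)
  have e2 := hs (t + 2 ^ (k + 1)) (by omega)
  rw [← Nat.add_assoc] at e2
  calc morse (s + t) = x (0 + (t : ℤ)) := e1.symm
    _ = x ((0 + (t : ℤ)) + L) := (hper _).symm
    _ = x (0 + ((t + 2 ^ (k + 1) : ℕ) : ℤ)) := by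
        congr 1
        push_cast [hL]
        ring
    _ = morse (s + t + 2 ^ (k + 1)) := e2

/-- D4: uniqueness of the offset for points of X -/
lemma offset_unique {x : ℤ → Bool} (hx : x ∈ morseShiftX) :
    ∀ k i i', i < 2 ^ k → i' < 2 ^ k → hasOffset k x i → hasOffset k x i' → i = i' := by
  intro k
  induction k with
  | zero => intro i i' hi hi' _ _; omega
  | succ k ih =>
    intro i i' hi hi' h h'
    have hpow : 0 < 2 ^ k := pow_pos (by norm_num) k
    have hmod : i % 2 ^ k = i' % 2 ^ k :=
      ih _ _ (Nat.mod_lt _ hpow) (Nat.mod_lt _ hpow) (hasOffset_down h) (hasOffset_down h')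
    by_contra hne
    have hd : i % 2 ^ k + 2 ^ k * (i / 2 ^ k) = i := Nat.mod_add_div _ _
    have hd' : i' % 2 ^ k + 2 ^ k * (i' / 2 ^ k) = i' := Nat.mod_add_div _ _
    have hdiv : i / 2 ^ k < 2 := by
      rw [Nat.div_lt_iff_lt_mul hpow]
      calc i < 2 ^ (k + 1) := hi
        _ = 2 * 2 ^ k := by rw [pow_succ, Nat.mul_comm]
    have hdiv' : i' / 2 ^ k < 2 := by
      rw [Nat.div_lt_iff_lt_mul hpow]
      calc i' < 2 ^ (k + 1) := hi'
        _ = 2 * 2 ^ k := by rw [pow_succ, Nat.mul_comm]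
    set r := i % 2 ^ k with hrdef
    interval_cases hdd : (i / 2 ^ k) <;> interval_cases hdd' : (i' / 2 ^ k)
    · omega
    · -- i = r, i' = r + 2^k
      have hieq : i = r := by omega
      have hieq' : i' = r + 2 ^ k := by omega
      rw [hieq] at h
      rw [hieq'] at h'
      exact half_shift_absurd hx k r h h'
    · have hieq : i = r + 2 ^ k := by omega
      have hieq' : i' = r := by omega
      rw [hieq] at h
      rw [hieq'] at h'
      exact half_shift_absurd hx k r h' h
    · omega

open MeasureTheory

lemma measurableSet_coordEq (n : ℤ) (c : Bool) :
    MeasurableSet {x : {x : ℤ → Bool // x ∈ morseShiftX} | x.val n = c} := by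
  have h : Measurable fun x : {x : ℤ → Bool // x ∈ morseShiftX} => x.val n :=
    (measurable_pi_apply n).comp measurable_subtype_coe
  exact h (measurableSet_singleton c)

lemma measurableSet_readsWord (p : ℤ) (w : List Bool) :
    MeasurableSet {x : {x : ℤ → Bool // x ∈ morseShiftX} | readsWord x.val p w} := by
  have he : {x : {x : ℤ → Bool // x ∈ morseShiftX} | readsWord x.val p w}
      = ⋂ (j : ℕ), ⋂ (_ : j < w.length),
        {x : {x : ℤ → Bool // x ∈ morseShiftX} | x.val (p + j) = w.getD j false} := by
    ext x
    simp [readsWord, Set.mem_iInter]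
  rw [he]
  exact MeasurableSet.iInter fun j => MeasurableSet.iInter fun _ => measurableSet_coordEq _ _

lemma measurableSet_hasOffset (k i : ℕ) :
    MeasurableSet {x : {x : ℤ → Bool // x ∈ morseShiftX} | hasOffset k x.val i} := by
  have he : {x : {x : ℤ → Bool // x ∈ morseShiftX} | hasOffset k x.val i} = ⋂ (m : ℤ),
      ({x : {x : ℤ → Bool // x ∈ morseShiftX} | readsWord x.val (-(i:ℤ) + m * 2 ^ k) (uWord k)} ∪
       {x : {x : ℤ → Bool // x ∈ morseShiftX} |
          readsWord x.val (-(i:ℤ) + m * 2 ^ k) (flipWord (uWord k))}) := by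
    ext x
    simp [hasOffset, Set.mem_iInter, Set.mem_union]
  rw [he]
  exact MeasurableSet.iInter fun m =>
    (measurableSet_readsWord _ _).union (measurableSet_readsWord _ _)

lemma measurableSet_cyl (k : ℕ) (b : Bool) (i : ℕ) : MeasurableSet (cyl k b i) :=
  (measurableSet_hasOffset k i).inter (measurableSet_coordEq 0 _)

lemma cyl_eq (k : ℕ) (b : Bool) (i : ℕ) (hi : i < 2 ^ k) :
    cyl k b i = {x | hasOffset k x.val i ∧ x.val 0 = xor b (morse i)} := by
  have hw : (if b then flipWord (uWord k) else uWord k).getD i false = xor b (morse i) := by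
    cases b
    · show (uWord k).getD i false = xor false (morse i)
      rw [uWord_getD hi, Bool.false_xor]
    · show (flipWord (uWord k)).getD i false = xor true (morse i)
      rw [flip_getD _ (by rw [uWord_length]; exact hi), uWord_getD hi, Bool.true_xor]
  unfold cyl
  rw [hw]

lemma blockAt_shift {y : ℤ → Bool} {p : ℤ} {b : Bool} {k : ℕ} :
    blockAt (shiftT y) p b k ↔ blockAt y (p + 1) b k := by
  unfold blockAt shiftT
  constructor <;> intro h j hj
  · have := h j hj
    rwa [show p + (j : ℤ) + 1 = p + 1 + (j : ℤ) from by ring] at this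
  · have := h j hj
    rwa [show p + (j : ℤ) + 1 = p + 1 + (j : ℤ) from by ring]

lemma hasOffset_shift {k : ℕ} {y : ℤ → Bool} {i : ℕ} :
    hasOffset k (shiftT y) (i + 1) ↔ hasOffset k y i := by
  rw [hasOffset_iff, hasOffset_iff]
  have e : ∀ m : ℤ, -(((i + 1 : ℕ) : ℤ)) + m * 2 ^ k + 1 = -(i : ℤ) + m * 2 ^ k := by
    intro m
    push_cast
    ring
  constructor <;> intro h m
  · obtain ⟨b, hb⟩ := h m
    rw [blockAt_shift] at hb
    rw [e m] at hb
    exact ⟨b, hb⟩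
  · obtain ⟨b, hb⟩ := h m
    refine ⟨b, ?_⟩
    rw [blockAt_shift, e m]
    exact hb

lemma xor_cancel_right' (a b c : Bool) : xor a c = xor b c ↔ a = b := by
  cases a <;> cases b <;> cases c <;> simp

lemma symb_equiv {y : ℤ → Bool} {i k : ℕ} (hi : i + 1 < 2 ^ k) (hOff : hasOffset k y i)
    (b : Bool) : shiftT y 0 = xor b (morse (i + 1)) ↔ y 0 = xor b (morse i) := by
  obtain ⟨b0, hb0⟩ := (hasOffset_iff.mp hOff) 0
  rw [show -(i:ℤ) + 0 * 2 ^ k = -(i:ℤ) from by ring] at hb0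
  have h0 : y 0 = xor b0 (morse i) := by
    have := hb0 i (by omega)
    rwa [show -(i:ℤ) + (i : ℤ) = 0 from by ring] at this
  have h1 : y 1 = xor b0 (morse (i + 1)) := by
    have := hb0 (i + 1) hi
    rwa [show -(i:ℤ) + ((i + 1 : ℕ) : ℤ) = 1 from by push_cast; ring] at this
  have hs0 : shiftT y 0 = y 1 := by
    unfold shiftT
    norm_num
  rw [hs0, h1, h0, xor_cancel_right', xor_cancel_right']

lemma shift_preimage {T : {x : ℤ → Bool // x ∈ morseShiftX} → {x : ℤ → Bool // x ∈ morseShiftX}}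
    (hT : ∀ x, (T x).val = shiftT x.val) {k i : ℕ} (hi : i + 1 < 2 ^ k) (b : Bool) :
    T ⁻¹' cyl k b (i + 1) = cyl k b i := by
  ext x
  rw [Set.mem_preimage, cyl_eq k b (i + 1) hi, cyl_eq k b i (by omega)]
  show (hasOffset k (T x).val (i + 1) ∧ (T x).val 0 = xor b (morse (i + 1))) ↔ _
  rw [hT x, hasOffset_shift]
  exact and_congr_right fun hOff => symb_equiv hi hOff b

lemma morse_add_pow {k i : ℕ} (hi : i < 2 ^ k) : morse (i + 2 ^ k) = !(morse i) := by
  have h := morse_block k 1 i hi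
  rw [one_mul] at h
  rw [Nat.add_comm, h, morse_one, Bool.true_xor]

lemma two_pow_succ_lt {k i : ℕ} (hi : i < 2 ^ k) : i + 2 ^ k < 2 ^ (k + 1) := by
  rw [pow_succ]
  omega

lemma cyl_refine {k i : ℕ} (hi : i < 2 ^ k) (b : Bool) :
    cyl k b i = cyl (k + 1) b i ∪ cyl (k + 1) (!b) (i + 2 ^ k) := by
  have hpow : 0 < 2 ^ k := pow_pos (by norm_num) k
  have hi1 : i < 2 ^ (k + 1) := lt_trans hi (by rw [pow_succ]; omega)
  have hi2 : i + 2 ^ k < 2 ^ (k + 1) := two_pow_succ_lt hi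
  have hbeq : ∀ c : Bool, xor (!b) (!c) = xor b c := by
    intro c; cases b <;> cases c <;> rfl
  rw [cyl_eq k b i hi, cyl_eq _ _ _ hi1, cyl_eq _ _ _ hi2]
  ext x
  simp only [Set.mem_setOf_eq, Set.mem_union]
  constructor
  · rintro ⟨hOff, hsym⟩
    obtain ⟨i₁, hi₁, hOff₁⟩ := exists_offset x.property (k + 1)
    have hmod : i₁ % 2 ^ k = i :=
      offset_unique x.property k _ _ (Nat.mod_lt _ hpow) hi (hasOffset_down hOff₁) hOff
    have hd : i₁ % 2 ^ k + 2 ^ k * (i₁ / 2 ^ k) = i₁ := Nat.mod_add_div _ _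
    have hdiv : i₁ / 2 ^ k < 2 := by
      rw [Nat.div_lt_iff_lt_mul hpow]
      calc i₁ < 2 ^ (k + 1) := hi₁
        _ = 2 * 2 ^ k := by rw [pow_succ, Nat.mul_comm]
    interval_cases hdd : (i₁ / 2 ^ k)
    · left
      have he : i₁ = i := by omega
      rw [he] at hOff₁
      exact ⟨hOff₁, hsym⟩
    · right
      have he : i₁ = i + 2 ^ k := by omega
      rw [he] at hOff₁
      refine ⟨hOff₁, ?_⟩
      rw [morse_add_pow hi, hbeq]
      exact hsym
  · rintro (⟨hOff₁, hsym⟩ | ⟨hOff₁, hsym⟩)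
    · refine ⟨?_, hsym⟩
      have := hasOffset_down hOff₁
      rwa [Nat.mod_eq_of_lt hi] at this
    · constructor
      · have := hasOffset_down hOff₁
        rwa [Nat.add_mod_right, Nat.mod_eq_of_lt hi] at this
      · rw [morse_add_pow hi, hbeq] at hsym
        exact hsym

lemma cyl_disj {k : ℕ} {b b' : Bool} {i i' : ℕ} (hi : i < 2 ^ k) (hi' : i' < 2 ^ k)
    (hne : ¬(i = i' ∧ b = b')) : cyl k b i ∩ cyl k b' i' = ∅ := by
  rw [cyl_eq k b i hi, cyl_eq k b' i' hi']
  ext x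
  simp only [Set.mem_inter_iff, Set.mem_setOf_eq, Set.mem_empty_iff_false, iff_false]
  rintro ⟨⟨h1, h2⟩, ⟨h1', h2'⟩⟩
  have hii : i = i' := offset_unique x.property k _ _ hi hi' h1 h1'
  subst hii
  rw [h2] at h2'
  rw [xor_cancel_right'] at h2'
  exact hne ⟨rfl, h2'⟩

lemma cyl_cover (k : ℕ) :
    ⋃ i ∈ Finset.range (2 ^ k), (cyl k false i ∪ cyl k true i) = Set.univ := by
  ext x
  simp only [Set.mem_iUnion, Set.mem_union, Finset.mem_range, Set.mem_univ, iff_true]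
  obtain ⟨i, hi, hOff⟩ := exists_offset x.property k
  refine ⟨i, hi, ?_⟩
  have hsym : x.val 0 = xor (xor (x.val 0) (morse i)) (morse i) := by
    cases x.val 0 <;> cases morse i <;> rfl
  cases hb : xor (x.val 0) (morse i)
  · left
    rw [cyl_eq k false i hi]
    rw [hb] at hsym
    exact ⟨hOff, hsym⟩
  · right
    rw [cyl_eq k true i hi]
    rw [hb] at hsym
    exact ⟨hOff, hsym⟩


open MeasureTheory

/-- Every shift-invariant Borel probability measure on X gives each of the 2^{k+1}
k-canonical cylinders measure 2^{-(k+1)}. -/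
theorem morse_cylinders_measure
    (μ : Measure {x : ℤ → Bool // x ∈ morseShiftX}) [IsProbabilityMeasure μ]
    (T : {x : ℤ → Bool // x ∈ morseShiftX} → {x : ℤ → Bool // x ∈ morseShiftX})
    (hT : ∀ x, (T x).val = shiftT x.val)
    (hμ : ∀ s : Set {x : ℤ → Bool // x ∈ morseShiftX},
      MeasurableSet s → μ (T ⁻¹' s) = μ s)
    (k i : ℕ) (hi : i < 2 ^ k) :
    μ (cyl k false i) = (2 ^ (k + 1) : ENNReal)⁻¹ ∧
    μ (cyl k true i) = (2 ^ (k + 1) : ENNReal)⁻¹ := by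
  have hconst : ∀ k' : ℕ, ∀ b : Bool, ∀ j, j < 2 ^ k' → μ (cyl k' b j) = μ (cyl k' b 0) := by
    intro k' b j
    induction j with
    | zero => intro _; rfl
    | succ j ih =>
      intro hj
      have h1 := hμ _ (measurableSet_cyl k' b (j + 1))
      rw [shift_preimage hT hj b] at h1
      rw [← h1]
      exact ih (by omega)
  have hrefine : ∀ k' : ℕ, ∀ b : Bool,
      μ (cyl k' b 0) = μ (cyl (k' + 1) b 0) + μ (cyl (k' + 1) (!b) 0) := by
    intro k' b
    have hpow : 0 < 2 ^ k' := pow_pos (by norm_num) k'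
    have hb1 : (0 : ℕ) < 2 ^ (k' + 1) := pow_pos (by norm_num) (k' + 1)
    have hb2 : 0 + 2 ^ k' < 2 ^ (k' + 1) := two_pow_succ_lt hpow
    rw [cyl_refine hpow b,
      measure_union (Set.disjoint_iff_inter_eq_empty.mpr
        (cyl_disj hb1 hb2 (by omega))) (measurableSet_cyl _ _ _),
      hconst (k' + 1) (!b) (0 + 2 ^ k') hb2]
  have hff : ∀ k' : ℕ, μ (cyl k' false 0) = μ (cyl k' true 0) := by
    intro k'
    rw [hrefine k' false, hrefine k' true]
    simp only [Bool.not_false, Bool.not_true]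
    exact add_comm _ _
  have hpow : 0 < 2 ^ k := pow_pos (by norm_num) k
  have hdisj : Set.PairwiseDisjoint (↑(Finset.range (2 ^ k)))
      (fun j => cyl k false j ∪ cyl k true j) := by
    intro a ha b' hb' hne
    simp only [Finset.coe_range, Set.mem_Iio] at ha hb'
    rw [Function.onFun]
    rw [Set.disjoint_union_left]
    constructor <;> rw [Set.disjoint_union_right] <;> constructor <;>
      exact Set.disjoint_iff_inter_eq_empty.mpr
        (cyl_disj ha hb' (fun h => hne h.1))
  have hsum := measure_biUnion_finset (μ := μ) hdisj
    (fun j _ => (measurableSet_cyl k false j).union (measurableSet_cyl k true j))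
  rw [cyl_cover k, measure_univ] at hsum
  have hterm : ∀ j ∈ Finset.range (2 ^ k),
      μ (cyl k false j ∪ cyl k true j) = 2 * μ (cyl k false 0) := by
    intro j hj
    rw [Finset.mem_range] at hj
    rw [measure_union (Set.disjoint_iff_inter_eq_empty.mpr
        (cyl_disj hj hj (by simp))) (measurableSet_cyl _ _ _),
      hconst k false j hj, hconst k true j hj, ← hff k, two_mul]
  rw [Finset.sum_congr rfl hterm, Finset.sum_const, Finset.card_range, nsmul_eq_mul] at hsum
  have hcast : ((2 ^ k : ℕ) : ENNReal) = (2 : ENNReal) ^ k := by push_cast; ring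
  rw [hcast] at hsum
  have hv : (2 ^ (k + 1) : ENNReal) * μ (cyl k false 0) = 1 := by
    rw [hsum]
    ring
  have h2 : (2 ^ (k + 1) : ENNReal) ≠ 0 := pow_ne_zero _ (by norm_num)
  have htop : (2 ^ (k + 1) : ENNReal) ≠ ⊤ := ENNReal.pow_ne_top ENNReal.ofNat_ne_top
  have hv0 : μ (cyl k false 0) = (2 ^ (k + 1) : ENNReal)⁻¹ := by
    have h := congrArg (fun z => (2 ^ (k + 1) : ENNReal)⁻¹ * z) hv
    rw [← mul_assoc, ENNReal.inv_mul_cancel h2 htop, one_mul, mul_one] at h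
    exact h
  constructor
  · rw [hconst k false i hi, hv0]
  · rw [hconst k true i hi, ← hff k, hv0]
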